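/- Let X be a Köthe reflexive F^n-directional Banach function space over Ω and E a set of finite positive measure. Suppose 1_E u ∈ X and 1_E u ∈ X' for all u ∈ F^n, and let A_{X,E}, A_{X',E} be reducing matrices, i.e., Hermitian positive definite matrices with |A_{X,E}u| ≤ ‖1_E u‖_X ≤ n^{1/2}|A_{X,E}u| and similarly for X'. Then ‖T_E‖_{X→X} is comparable (up to constants depending only on n) to μ(E)^{-1}‖A_{X,E} A_{X',E}‖, the operator norm of the product matrix. -/

import Mathlib

open MeasureTheory ENNReal
open scoped ComplexOrder

/-- The Köthe dual (extended-valued) norm of an `𝔽ⁿ`-directional Banach function space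
encoded by its extended norm `eN`. -/
noncomputable def dirDualNorm {𝕜 : Type*} [RCLike 𝕜] {n : ℕ}
    [MeasurableSpace (EuclideanSpace 𝕜 (Fin n))]
    {Ω : Type*} [MeasurableSpace Ω]
    (μ : Measure Ω) (eN : (Ω → EuclideanSpace 𝕜 (Fin n)) → ℝ≥0∞)
    (g : Ω → EuclideanSpace 𝕜 (Fin n)) : ℝ≥0∞ :=
  ⨆ f ∈ {f : Ω → EuclideanSpace 𝕜 (Fin n) | Measurable f ∧ eN f ≤ 1},
    ∫⁻ x, (‖(inner 𝕜 (f x) (g x) : 𝕜)‖₊ : ℝ≥0∞) ∂μ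

/-- The averaging operator `T_E f := (⨍_E f dμ) 1_E`. -/
noncomputable def avgOp {𝕜 : Type*} [RCLike 𝕜] {n : ℕ} {Ω : Type*} [MeasurableSpace Ω]
    (μ : Measure Ω) (E : Set Ω) (f : Ω → EuclideanSpace 𝕜 (Fin n)) :
    Ω → EuclideanSpace 𝕜 (Fin n) :=
  E.indicator fun _ => ⨍ x in E, f x ∂μ

theorem ofReal_norm_eq_coe_nnnorm {E : Type*} [SeminormedAddCommGroup E] (a : E) :
    ENNReal.ofReal ‖a‖ = (‖a‖₊ : ℝ≥0∞) :=
  ofReal_norm_eq_enorm a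

theorem ofReal_integral_norm_eq_lintegral_nnnorm {α : Type*} [MeasurableSpace α] {μ : Measure α}
    {P : Type*} [NormedAddCommGroup P] {f : α → P} (hf : Integrable f μ) :
    ENNReal.ofReal (∫ x, ‖f x‖ ∂μ) = ∫⁻ x, (‖f x‖₊ : ℝ≥0∞) ∂μ :=
  ofReal_integral_norm_eq_lintegral_enorm hf

section Helpers

variable {𝕜 : Type*} [RCLike 𝕜] {n : ℕ}
  [MeasurableSpace (EuclideanSpace 𝕜 (Fin n))] [BorelSpace (EuclideanSpace 𝕜 (Fin n))]
  {Ω : Type} [MeasurableSpace Ω] {μ : Measure Ω}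
  {eN : (Ω → EuclideanSpace 𝕜 (Fin n)) → ℝ≥0∞}

omit [BorelSpace (EuclideanSpace 𝕜 (Fin n))] in
theorem le_dirDualNorm (f g : Ω → EuclideanSpace 𝕜 (Fin n)) (hf : Measurable f)
    (hf1 : eN f ≤ 1) :
    ∫⁻ x, (‖(inner 𝕜 (f x) (g x) : 𝕜)‖₊ : ℝ≥0∞) ∂μ ≤ dirDualNorm μ eN g := by
  have h : f ∈ {f : Ω → EuclideanSpace 𝕜 (Fin n) | Measurable f ∧ eN f ≤ 1} := ⟨hf, hf1⟩
  unfold dirDualNorm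
  set F := fun (f : Ω → EuclideanSpace 𝕜 (Fin n)) =>
    ∫⁻ x, (‖(inner 𝕜 (f x) (g x) : 𝕜)‖₊ : ℝ≥0∞) ∂μ with hF
  show F f ≤ ⨆ f' ∈ {f : Ω → EuclideanSpace 𝕜 (Fin n) | Measurable f ∧ eN f ≤ 1}, F f'
  exact le_biSup F h

omit [BorelSpace (EuclideanSpace 𝕜 (Fin n))] in
theorem exists_lt_dirDualNorm (g : Ω → EuclideanSpace 𝕜 (Fin n)) {τ : ℝ≥0∞}
    (h : τ < dirDualNorm μ eN g) :
    ∃ f, Measurable f ∧ eN f ≤ 1 ∧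
      τ < ∫⁻ x, (‖(inner 𝕜 (f x) (g x) : 𝕜)‖₊ : ℝ≥0∞) ∂μ := by
  unfold dirDualNorm at h
  obtain ⟨f, hf⟩ := lt_iSup_iff.mp h
  obtain ⟨hmem, hlt⟩ := lt_iSup_iff.mp hf
  exact ⟨f, hmem.1, hmem.2, hlt⟩

/-- Hölder-type inequality for the Köthe dual. -/
theorem lintegral_inner_le
    (hHom : ∀ (a : 𝕜) (f : Ω → EuclideanSpace 𝕜 (Fin n)),
      eN (fun x => a • f x) = ‖a‖₊ * eN f)
    (f g : Ω → EuclideanSpace 𝕜 (Fin n)) (hf : Measurable f) (hftop : eN f ≠ ⊤)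
    (hgtop : dirDualNorm μ eN g ≠ ⊤) :
    ∫⁻ x, (‖(inner 𝕜 (f x) (g x) : 𝕜)‖₊ : ℝ≥0∞) ∂μ ≤ eN f * dirDualNorm μ eN g := by
  set I := ∫⁻ x, (‖(inner 𝕜 (f x) (g x) : 𝕜)‖₊ : ℝ≥0∞) ∂μ with hI
  have key : ∀ a : 𝕜, (‖a‖₊ : ℝ≥0∞) * eN f ≤ 1 →
      (‖a‖₊ : ℝ≥0∞) * I ≤ dirDualNorm μ eN g := by
    intro a ha
    have hm : Measurable fun x => a • f x := (measurable_const_smul a).comp hf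
    have h1 : eN (fun x => a • f x) ≤ 1 := by rw [hHom]; exact ha
    have := le_dirDualNorm (μ := μ) (fun x => a • f x) g hm h1
    calc (‖a‖₊ : ℝ≥0∞) * I
        = ∫⁻ x, (‖a‖₊ : ℝ≥0∞) * (‖(inner 𝕜 (f x) (g x) : 𝕜)‖₊ : ℝ≥0∞) ∂μ := by
          rw [hI, ← lintegral_const_mul' _ _ coe_ne_top]
      _ = ∫⁻ x, (‖(inner 𝕜 (a • f x) (g x) : 𝕜)‖₊ : ℝ≥0∞) ∂μ := by
          congr 1; ext x
          rw [inner_smul_left, nnnorm_mul, RCLike.nnnorm_conj]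
          push_cast
          ring
      _ ≤ dirDualNorm μ eN g := this
  rcases eq_or_ne (eN f) 0 with h0 | h0
  · rcases eq_or_ne I 0 with hI0 | hI0
    · simp [hI0]
    · exfalso
      have hd : dirDualNorm μ eN g / I ≠ ⊤ :=
        (ENNReal.div_lt_top hgtop hI0).ne
      obtain ⟨k, hk⟩ := ENNReal.exists_nat_gt hd
      have h1 : (k : ℝ≥0∞) * I ≤ dirDualNorm μ eN g := by
        have := key (k : 𝕜) (by simp [h0])
        simpa using this
      have : (k : ℝ≥0∞) ≤ dirDualNorm μ eN g / I :=
        (ENNReal.le_div_iff_mul_le (Or.inl hI0) (Or.inr hgtop)).mpr h1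
      exact absurd this (not_le.mpr hk)
  · have hr : 0 < (eN f).toReal := ENNReal.toReal_pos h0 hftop
    set r := (eN f).toReal with hrdef
    set a : 𝕜 := (RCLike.ofReal r⁻¹ : 𝕜) with hadef
    have hna : (‖a‖₊ : ℝ≥0∞) = ENNReal.ofReal r⁻¹ := by
      rw [hadef, ← ofReal_norm_eq_coe_nnnorm, RCLike.norm_ofReal,
        abs_of_nonneg (inv_nonneg.mpr hr.le)]
    have hmul : (‖a‖₊ : ℝ≥0∞) * eN f = 1 := by
      rw [hna, ← ENNReal.ofReal_toReal hftop, ← hrdef,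
        ← ENNReal.ofReal_mul (inv_nonneg.mpr hr.le), inv_mul_cancel₀ hr.ne', ENNReal.ofReal_one]
    have h2 := key a hmul.le
    calc I = (eN f * (‖a‖₊ : ℝ≥0∞)) * I := by rw [mul_comm (eN f), hmul, one_mul]
    _ = eN f * ((‖a‖₊ : ℝ≥0∞) * I) := by ring
    _ ≤ eN f * dirDualNorm μ eN g := mul_le_mul_right h2 _

omit [MeasurableSpace (EuclideanSpace 𝕜 (Fin n))] [BorelSpace (EuclideanSpace 𝕜 (Fin n))]
  [MeasurableSpace Ω] in
theorem euclid_norm_le_sum (x : EuclideanSpace 𝕜 (Fin n)) : ‖x‖ ≤ ∑ i, ‖x i‖ := by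
  rw [EuclideanSpace.norm_eq]
  calc Real.sqrt (∑ i, ‖x i‖ ^ 2) ≤ Real.sqrt ((∑ i, ‖x i‖) ^ 2) :=
    Real.sqrt_le_sqrt (Finset.sum_sq_le_sq_sum_of_nonneg (fun i _ => norm_nonneg _))
  _ = ∑ i, ‖x i‖ := Real.sqrt_sq (Finset.sum_nonneg fun i _ => norm_nonneg _)

omit [BorelSpace (EuclideanSpace 𝕜 (Fin n))] in
theorem lintegral_inner_indicator (E : Set Ω) (hE : MeasurableSet E)
    (f : Ω → EuclideanSpace 𝕜 (Fin n)) (v : EuclideanSpace 𝕜 (Fin n)) :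
    ∫⁻ x, (‖(inner 𝕜 (f x) ((E.indicator fun _ => v) x) : 𝕜)‖₊ : ℝ≥0∞) ∂μ
      = ∫⁻ x in E, (‖(inner 𝕜 (f x) v : 𝕜)‖₊ : ℝ≥0∞) ∂μ := by
  have h : (fun x => (‖(inner 𝕜 (f x) ((E.indicator fun _ => v) x) : 𝕜)‖₊ : ℝ≥0∞))
      = E.indicator fun x => (‖(inner 𝕜 (f x) v : 𝕜)‖₊ : ℝ≥0∞) := by
    ext x
    by_cases hx : x ∈ E <;> simp [hx]
  rw [h]; exact lintegral_indicator hE _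

/-- A function of finite extended norm is integrable on `E`. -/
theorem integrableOn_of_eN
    (hHom : ∀ (a : 𝕜) (f : Ω → EuclideanSpace 𝕜 (Fin n)),
      eN (fun x => a • f x) = ‖a‖₊ * eN f)
    (E : Set Ω) (hE : MeasurableSet E)
    (hX'fin : ∀ u : EuclideanSpace 𝕜 (Fin n),
      dirDualNorm μ eN (E.indicator fun _ => u) ≠ ⊤)
    (f : Ω → EuclideanSpace 𝕜 (Fin n)) (hf : Measurable f) (hftop : eN f ≠ ⊤) :
    IntegrableOn f E μ := by
  refine ⟨hf.aestronglyMeasurable, ?_⟩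
  have hcoord : ∀ i : Fin n, ∫⁻ x in E, (‖f x i‖₊ : ℝ≥0∞) ∂μ < ⊤ := by
    intro i
    have h1 : ∀ x, (‖f x i‖₊ : ℝ≥0∞)
        = (‖(inner 𝕜 (f x) (EuclideanSpace.single i (1:𝕜)) : 𝕜)‖₊ : ℝ≥0∞) := by
      intro x
      rw [EuclideanSpace.inner_single_right]
      simp
    calc ∫⁻ x in E, (‖f x i‖₊ : ℝ≥0∞) ∂μ
        = ∫⁻ x in E, (‖(inner 𝕜 (f x) (EuclideanSpace.single i (1:𝕜)) : 𝕜)‖₊ : ℝ≥0∞) ∂μ := by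
          simp_rw [h1]
      _ = ∫⁻ x, (‖(inner 𝕜 (f x)
            ((E.indicator fun _ => EuclideanSpace.single i (1:𝕜)) x) : 𝕜)‖₊ : ℝ≥0∞) ∂μ :=
          (lintegral_inner_indicator E hE f _).symm
      _ ≤ eN f * dirDualNorm μ eN (E.indicator fun _ => EuclideanSpace.single i (1:𝕜)) :=
          lintegral_inner_le hHom f _ hf hftop (hX'fin _)
      _ < ⊤ := ENNReal.mul_lt_top hftop.lt_top (hX'fin _).lt_top
  have hmeas : ∀ i : Fin n, Measurable fun x => (‖f x i‖₊ : ℝ≥0∞) := by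
    intro i
    have : Measurable fun x => (inner 𝕜 (f x) (EuclideanSpace.single i (1:𝕜)) : 𝕜) :=
      (Continuous.inner continuous_id continuous_const).measurable.comp hf
    have h2 := this.nnnorm.coe_nnreal_ennreal
    have h1 : ∀ x, (‖f x i‖₊ : ℝ≥0∞)
        = (‖(inner 𝕜 (f x) (EuclideanSpace.single i (1:𝕜)) : 𝕜)‖₊ : ℝ≥0∞) := by
      intro x
      rw [EuclideanSpace.inner_single_right]
      simp
    simpa [← h1] using h2
  have hbound : ∀ x, (‖f x‖₊ : ℝ≥0∞) ≤ ∑ i, (‖f x i‖₊ : ℝ≥0∞) := by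
    intro x
    rw [← ofReal_norm_eq_coe_nnnorm]
    have : ∑ i, (‖f x i‖₊ : ℝ≥0∞) = ENNReal.ofReal (∑ i, ‖f x i‖) := by
      rw [ENNReal.ofReal_sum_of_nonneg (fun i _ => norm_nonneg _)]
      congr 1; ext i; rw [← ofReal_norm_eq_coe_nnnorm]
    rw [this]
    exact ENNReal.ofReal_le_ofReal (euclid_norm_le_sum (f x))
  rw [HasFiniteIntegral]
  calc ∫⁻ x in E, (‖f x‖₊ : ℝ≥0∞) ∂μ
      ≤ ∫⁻ x in E, ∑ i, (‖f x i‖₊ : ℝ≥0∞) ∂μ := lintegral_mono fun x => hbound x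
    _ = ∑ i, ∫⁻ x in E, (‖f x i‖₊ : ℝ≥0∞) ∂μ :=
        lintegral_finset_sum' _ (fun i _ => (hmeas i).aemeasurable)
    _ < ⊤ := ENNReal.sum_lt_top.mpr fun i _ => hcoord i

/-- Key duality bound on the integral of `f` over `E`. -/
theorem inner_setIntegral_le
    (hHom : ∀ (a : 𝕜) (f : Ω → EuclideanSpace 𝕜 (Fin n)),
      eN (fun x => a • f x) = ‖a‖₊ * eN f)
    (E : Set Ω) (hE : MeasurableSet E)
    (hX'fin : ∀ u : EuclideanSpace 𝕜 (Fin n),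
      dirDualNorm μ eN (E.indicator fun _ => u) ≠ ⊤)
    (B : Matrix (Fin n) (Fin n) 𝕜)
    (hBup : ∀ u : EuclideanSpace 𝕜 (Fin n),
      dirDualNorm μ eN (E.indicator fun _ => u) ≤
        ENNReal.ofReal (Real.sqrt n) * (‖Matrix.toEuclideanLin B u‖₊ : ℝ≥0∞))
    (f : Ω → EuclideanSpace 𝕜 (Fin n)) (hf : Measurable f) (hftop : eN f ≠ ⊤)
    (hInt : IntegrableOn f E μ) (v : EuclideanSpace 𝕜 (Fin n)) :
    ‖(inner 𝕜 (∫ x in E, f x ∂μ) v : 𝕜)‖ ≤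
      (eN f).toReal * (Real.sqrt n * ‖Matrix.toEuclideanLin B v‖) := by
  have hlin : ∫⁻ x in E, (‖(inner 𝕜 v (f x) : 𝕜)‖₊ : ℝ≥0∞) ∂μ ≤
      eN f * (ENNReal.ofReal (Real.sqrt n) * (‖Matrix.toEuclideanLin B v‖₊ : ℝ≥0∞)) := by
    calc ∫⁻ x in E, (‖(inner 𝕜 v (f x) : 𝕜)‖₊ : ℝ≥0∞) ∂μ
        = ∫⁻ x in E, (‖(inner 𝕜 (f x) v : 𝕜)‖₊ : ℝ≥0∞) ∂μ := by
          congr 1; ext x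
          rw [← ofReal_norm_eq_coe_nnnorm, ← ofReal_norm_eq_coe_nnnorm, norm_inner_symm]
      _ = ∫⁻ x, (‖(inner 𝕜 (f x) ((E.indicator fun _ => v) x) : 𝕜)‖₊ : ℝ≥0∞) ∂μ :=
          (lintegral_inner_indicator E hE f v).symm
      _ ≤ eN f * dirDualNorm μ eN (E.indicator fun _ => v) :=
          lintegral_inner_le hHom f _ hf hftop (hX'fin v)
      _ ≤ eN f * (ENNReal.ofReal (Real.sqrt n) * (‖Matrix.toEuclideanLin B v‖₊ : ℝ≥0∞)) :=
          mul_le_mul_right (hBup v) _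
  have hfin : eN f * (ENNReal.ofReal (Real.sqrt n) * (‖Matrix.toEuclideanLin B v‖₊ : ℝ≥0∞)) ≠ ⊤ :=
    ENNReal.mul_ne_top hftop (ENNReal.mul_ne_top ofReal_ne_top coe_ne_top)
  calc ‖(inner 𝕜 (∫ x in E, f x ∂μ) v : 𝕜)‖
      = ‖(inner 𝕜 v (∫ x in E, f x ∂μ) : 𝕜)‖ := norm_inner_symm _ _
    _ = ‖∫ x in E, (inner 𝕜 v (f x) : 𝕜) ∂μ‖ := by rw [integral_inner hInt v]
    _ ≤ (∫⁻ x in E, ENNReal.ofReal ‖(inner 𝕜 v (f x) : 𝕜)‖ ∂μ).toReal :=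
        norm_integral_le_lintegral_norm _
    _ = (∫⁻ x in E, (‖(inner 𝕜 v (f x) : 𝕜)‖₊ : ℝ≥0∞) ∂μ).toReal := by
        simp_rw [ofReal_norm_eq_coe_nnnorm]
    _ ≤ (eN f * (ENNReal.ofReal (Real.sqrt n) *
          (‖Matrix.toEuclideanLin B v‖₊ : ℝ≥0∞))).toReal := ENNReal.toReal_mono hfin hlin
    _ = (eN f).toReal * (Real.sqrt n * ‖Matrix.toEuclideanLin B v‖) := by
        rw [ENNReal.toReal_mul, ENNReal.toReal_mul, ENNReal.toReal_ofReal (Real.sqrt_nonneg _),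
          coe_toReal, coe_nnnorm]

end Helpers

set_option maxHeartbeats 2000000 in
/-- Let `X` be a Köthe reflexive `𝔽ⁿ`-directional Banach function space over
`Ω` and `E` a set of finite positive measure with `1_E u ∈ X, X'` for all `u ∈ 𝔽ⁿ`.  If
`A = A_{X,E}` and `B = A_{X',E}` are reducing matrices, i.e. Hermitian positive definite
matrices with `|A u| ≤ ‖1_E u‖_X ≤ √n |A u|` and similarly for `X'`, then the operator norm
`‖T_E‖_{X→X}` is comparable, up to constants depending only on `n`, to
`μ(E)⁻¹ ‖A B‖`, the operator norm of the product matrix. -/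
theorem stmt13 (𝕜 : Type*) [RCLike 𝕜] (n : ℕ)
    [MeasurableSpace (EuclideanSpace 𝕜 (Fin n))] [BorelSpace (EuclideanSpace 𝕜 (Fin n))] :
    ∃ c C : ℝ≥0∞, 0 < c ∧ C ≠ ⊤ ∧
      ∀ (Ω : Type) (_ : MeasurableSpace Ω) (μ : Measure Ω)
        (eN : (Ω → EuclideanSpace 𝕜 (Fin n)) → ℝ≥0∞),
        SigmaFinite μ →
        -- directional ideal property
        (∀ (h : Ω → 𝕜) (f : Ω → EuclideanSpace 𝕜 (Fin n)),
          Measurable h → (∀ x, ‖h x‖ ≤ 1) → eN (fun x => h x • f x) ≤ eN f) →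
        -- homogeneity
        (∀ (a : 𝕜) (f : Ω → EuclideanSpace 𝕜 (Fin n)),
          eN (fun x => a • f x) = ‖a‖₊ * eN f) →
        -- triangle inequality (Banach, not just quasi-Banach)
        (∀ f g : Ω → EuclideanSpace 𝕜 (Fin n),
          eN (fun x => f x + g x) ≤ eN f + eN g) →
        -- Köthe reflexivity: X'' = X with equal norms
        (∀ f : Ω → EuclideanSpace 𝕜 (Fin n), Measurable f →
          dirDualNorm μ (dirDualNorm μ eN) f = eN f) →
        ∀ E : Set Ω, MeasurableSet E → 0 < μ E → μ E ≠ ⊤ →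
        -- `1_E u ∈ X` and `1_E u ∈ X'` for all `u`
        (∀ u : EuclideanSpace 𝕜 (Fin n), eN (E.indicator fun _ => u) ≠ ⊤) →
        (∀ u : EuclideanSpace 𝕜 (Fin n), dirDualNorm μ eN (E.indicator fun _ => u) ≠ ⊤) →
        ∀ A B : Matrix (Fin n) (Fin n) 𝕜, A.PosDef → B.PosDef →
        -- `A` is a reducing matrix of `E` in `X`
        (∀ u : EuclideanSpace 𝕜 (Fin n),
          (‖Matrix.toEuclideanLin A u‖₊ : ℝ≥0∞) ≤ eN (E.indicator fun _ => u) ∧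
          eN (E.indicator fun _ => u) ≤
            ENNReal.ofReal (Real.sqrt n) * (‖Matrix.toEuclideanLin A u‖₊ : ℝ≥0∞)) →
        -- `B` is a reducing matrix of `E` in `X'`
        (∀ u : EuclideanSpace 𝕜 (Fin n),
          (‖Matrix.toEuclideanLin B u‖₊ : ℝ≥0∞) ≤ dirDualNorm μ eN (E.indicator fun _ => u) ∧
          dirDualNorm μ eN (E.indicator fun _ => u) ≤
            ENNReal.ofReal (Real.sqrt n) * (‖Matrix.toEuclideanLin B u‖₊ : ℝ≥0∞)) →
        c * ((μ E)⁻¹ * (‖Matrix.toEuclideanCLM (𝕜 := 𝕜) (A * B)‖₊ : ℝ≥0∞)) ≤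
            sInf {M : ℝ≥0∞ | ∀ f : Ω → EuclideanSpace 𝕜 (Fin n), Measurable f →
              eN (avgOp μ E f) ≤ M * eN f} ∧
          sInf {M : ℝ≥0∞ | ∀ f : Ω → EuclideanSpace 𝕜 (Fin n), Measurable f →
              eN (avgOp μ E f) ≤ M * eN f} ≤
            C * ((μ E)⁻¹ * (‖Matrix.toEuclideanCLM (𝕜 := 𝕜) (A * B)‖₊ : ℝ≥0∞)) := by
  refine ⟨(2 : ℝ≥0∞)⁻¹, (n : ℝ≥0∞), by simp, by simp, ?_⟩
  intro Ω _ μ eN _hσ hIdeal hHom _hAdd _hRefl E hE hEpos hEfin hXfin hX'fin A B hApd hBpd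
    hAred hBred
  have hTapp : ∀ (M : Matrix (Fin n) (Fin n) 𝕜) x,
      Matrix.toEuclideanCLM (𝕜 := 𝕜) M x = Matrix.toEuclideanLin M x := fun M x =>
    LinearMap.congr_fun (Matrix.coe_toEuclideanCLM_eq_toEuclideanLin M) x
  have hswap : ‖Matrix.toEuclideanCLM (𝕜 := 𝕜) (B * A)‖ =
      ‖Matrix.toEuclideanCLM (𝕜 := 𝕜) (A * B)‖ := by
    have h : Matrix.toEuclideanCLM (𝕜 := 𝕜) (B * A)
        = star (Matrix.toEuclideanCLM (𝕜 := 𝕜) (A * B)) := by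
      rw [← map_star]
      congr 1
      rw [Matrix.star_eq_conjTranspose, Matrix.conjTranspose_mul, hApd.1.eq, hBpd.1.eq]
    rw [h, ContinuousLinearMap.star_eq_adjoint]
    exact (ContinuousLinearMap.adjoint :
      (_ →L[𝕜] _) ≃ₗᵢ⋆[𝕜] _).norm_map _
  have hAsymm : ∀ x y : EuclideanSpace 𝕜 (Fin n),
      (inner 𝕜 (Matrix.toEuclideanLin A x) y : 𝕜) = inner 𝕜 x (Matrix.toEuclideanLin A y) :=
    (Matrix.isHermitian_iff_isSymmetric.mp hApd.1)
  set K := ‖Matrix.toEuclideanCLM (𝕜 := 𝕜) (A * B)‖ with hK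
  set Nrm := (‖Matrix.toEuclideanCLM (𝕜 := 𝕜) (A * B)‖₊ : ℝ≥0∞) with hNrm
  have hcomp : ∀ (M N : Matrix (Fin n) (Fin n) 𝕜) (x : EuclideanSpace 𝕜 (Fin n)),
      Matrix.toEuclideanLin (M * N) x = Matrix.toEuclideanLin M (Matrix.toEuclideanLin N x) := by
    intro M N x
    rw [← hTapp, ← hTapp, ← hTapp, map_mul]
    rfl
  have hcμ : ENNReal.ofReal (μ E).toReal⁻¹ = (μ E)⁻¹ := by
    rw [ENNReal.ofReal_inv_of_pos (ENNReal.toReal_pos hEpos.ne' hEfin),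
      ENNReal.ofReal_toReal hEfin]
  have hcpos : 0 < (μ E).toReal⁻¹ := inv_pos.mpr (ENNReal.toReal_pos hEpos.ne' hEfin)
  constructor
  · -- lower bound
    refine le_sInf fun M hM => ?_
    rcases eq_or_ne Nrm 0 with h0 | h0
    · rw [h0, mul_zero, mul_zero]
      exact zero_le
    · have hKpos : 0 < K := by
        rw [hK]
        have : Matrix.toEuclideanCLM (𝕜 := 𝕜) (A * B) ≠ 0 := by
          intro h
          exact h0 (by simp [hNrm, h])
        exact norm_pos_iff.mpr this
      have hK2 : K / 2 < ‖Matrix.toEuclideanCLM (𝕜 := 𝕜) (B * A)‖ := by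
        rw [hswap]; linarith
      obtain ⟨y, hy1, hy2⟩ :=
        (Matrix.toEuclideanCLM (𝕜 := 𝕜) (B * A)).exists_lt_apply_of_lt_opNorm hK2
      set v := Matrix.toEuclideanLin A y with hv
      have hvB : K / 2 < ‖Matrix.toEuclideanLin B v‖ := by
        rw [hv, ← hcomp, ← hTapp]
        exact hy2
      have hτ : ENNReal.ofReal (K / 2) <
          dirDualNorm μ eN (E.indicator fun _ => v) := by
        refine lt_of_lt_of_le ?_ (hBred v).1
        rw [← ofReal_norm_eq_coe_nnnorm]
        exact (ENNReal.ofReal_lt_ofReal_iff (lt_trans (by positivity) hvB)).mpr hvB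
      obtain ⟨g, hgm, hg1, hgI⟩ := exists_lt_dirDualNorm _ hτ
      -- the unimodular twist
      set z : Ω → 𝕜 := fun x => (inner 𝕜 v (g x) : 𝕜) with hz
      have hzm : Measurable z :=
        (Continuous.inner continuous_const continuous_id).measurable.comp hgm
      set h : Ω → 𝕜 := fun x => (starRingEnd 𝕜) (z x) * ((‖z x‖ : 𝕜))⁻¹ with hh
      have hhm : Measurable h := by
        apply Measurable.mul
        · exact RCLike.continuous_conj.measurable.comp hzm
        · exact (RCLike.continuous_ofReal.measurable.comp hzm.norm).inv
      have hhb : ∀ x, ‖h x‖ ≤ 1 := by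
        intro x
        rcases eq_or_ne (z x) 0 with hx | hx
        · simp [hh, hx]
        · rw [hh]
          simp only [norm_mul, RCLike.norm_conj, norm_inv, RCLike.norm_ofReal,
            abs_of_nonneg (norm_nonneg (z x))]
          rw [mul_inv_cancel₀ (norm_ne_zero_iff.mpr hx)]
      set f' : Ω → EuclideanSpace 𝕜 (Fin n) := fun x => h x • g x with hf'
      have hf'm : Measurable f' := hhm.smul hgm
      have heNf' : eN f' ≤ 1 := (hIdeal h g hhm hhb).trans hg1
      have hInt' : IntegrableOn f' E μ :=
        integrableOn_of_eN hHom E hE hX'fin f' hf'm (heNf'.trans_lt one_lt_top).ne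
      have hIntg : IntegrableOn g E μ :=
        integrableOn_of_eN hHom E hE hX'fin g hgm (hg1.trans_lt one_lt_top).ne
      set u := ∫ x in E, f' x ∂μ with hu
      have hpt : ∀ x, (inner 𝕜 v (f' x) : 𝕜) = ((‖z x‖ : ℝ) : 𝕜) := by
        intro x
        have hstep : (inner 𝕜 v (f' x) : 𝕜)
            = ((starRingEnd 𝕜) (z x) * (((‖z x‖ : ℝ) : 𝕜))⁻¹) * z x := by
          simp only [hf', hh, hz, inner_smul_right]
        rw [hstep]
        rcases eq_or_ne (z x) 0 with hx | hx
        · simp [hx]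
        · have hnz : ((‖z x‖ : ℝ) : 𝕜) ≠ 0 := by
            simp [norm_ne_zero_iff.mpr hx]
          calc ((starRingEnd 𝕜) (z x) * (((‖z x‖ : ℝ) : 𝕜))⁻¹) * z x
              = ((starRingEnd 𝕜) (z x) * z x) * (((‖z x‖ : ℝ) : 𝕜))⁻¹ := by ring
            _ = (((‖z x‖ : ℝ) : 𝕜)) ^ 2 * (((‖z x‖ : ℝ) : 𝕜))⁻¹ := by rw [RCLike.conj_mul]
            _ = ((‖z x‖ : ℝ) : 𝕜) := by
                rw [sq, mul_assoc, mul_inv_cancel₀ hnz, mul_one]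
      set J := ∫ x in E, ‖z x‖ ∂μ with hJ
      have hzint : Integrable z (μ.restrict E) := by
        have : z = fun x => (innerSL 𝕜 v) (g x) := rfl
        rw [this]
        exact (innerSL 𝕜 v).integrable_comp hIntg
      have hJlint : ENNReal.ofReal J = ∫⁻ x in E, (‖z x‖₊ : ℝ≥0∞) ∂μ := by
        rw [hJ]
        exact ofReal_integral_norm_eq_lintegral_nnnorm hzint
      have hKJ : K / 2 < J := by
        have h1 : ∫⁻ x, (‖(inner 𝕜 (g x) ((E.indicator fun _ => v) x) : 𝕜)‖₊ : ℝ≥0∞) ∂μ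
            = ∫⁻ x in E, (‖z x‖₊ : ℝ≥0∞) ∂μ := by
          rw [lintegral_inner_indicator E hE g v]
          congr 1; ext x
          rw [← ofReal_norm_eq_coe_nnnorm, ← ofReal_norm_eq_coe_nnnorm, hz,
            norm_inner_symm]
        rw [h1, ← hJlint] at hgI
        exact (ENNReal.ofReal_lt_ofReal_iff_of_nonneg (by positivity)).mp hgI
      have hvu : (inner 𝕜 v u : 𝕜) = ((J : ℝ) : 𝕜) := by
        rw [hu, ← integral_inner hInt' v]
        calc ∫ x in E, (inner 𝕜 v (f' x) : 𝕜) ∂μ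
            = ∫ x in E, ((‖z x‖ : ℝ) : 𝕜) ∂μ := by
              congr 1; ext x; exact hpt x
          _ = ((J : ℝ) : 𝕜) := integral_ofReal
      have hJle : J ≤ ‖Matrix.toEuclideanLin A u‖ := by
        have h1 : ‖(inner 𝕜 v u : 𝕜)‖ = J := by
          rw [hvu, RCLike.norm_ofReal, abs_of_nonneg]
          rw [hJ]
          exact integral_nonneg fun x => norm_nonneg _
        have h2 : (inner 𝕜 v u : 𝕜) = inner 𝕜 y (Matrix.toEuclideanLin A u) := by
          rw [hv]; exact hAsymm y u
        calc J = ‖(inner 𝕜 y (Matrix.toEuclideanLin A u) : 𝕜)‖ := by rw [← h2, h1]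
          _ ≤ ‖y‖ * ‖Matrix.toEuclideanLin A u‖ := norm_inner_le_norm _ _
          _ ≤ 1 * ‖Matrix.toEuclideanLin A u‖ :=
              mul_le_mul_of_nonneg_right hy1.le (norm_nonneg _)
          _ = ‖Matrix.toEuclideanLin A u‖ := one_mul _
      -- conclude
      have hMle : eN (avgOp μ E f') ≤ M := by
        calc eN (avgOp μ E f') ≤ M * eN f' := hM f' hf'm
          _ ≤ M * 1 := mul_le_mul_right heNf' M
          _ = M := mul_one M
      have havg : avgOp μ E f' = E.indicator fun _ => ((μ E).toReal⁻¹ • u) := by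
        rw [avgOp, setAverage_eq, hu, measureReal_def]
      have hlow : ENNReal.ofReal ((μ E).toReal⁻¹ * (K / 2)) ≤ eN (avgOp μ E f') := by
        rw [havg]
        refine le_trans ?_ (hAred ((μ E).toReal⁻¹ • u)).1
        have hmap : Matrix.toEuclideanLin A ((μ E).toReal⁻¹ • u)
            = (μ E).toReal⁻¹ • Matrix.toEuclideanLin A u :=
          LinearMap.map_smul_of_tower _ _ _
        rw [← ofReal_norm_eq_coe_nnnorm, hmap, norm_smul, Real.norm_eq_abs,
          abs_of_nonneg hcpos.le]
        exact ENNReal.ofReal_le_ofReal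
          (mul_le_mul_of_nonneg_left (le_trans hKJ.le hJle) hcpos.le)
      have heq : (2 : ℝ≥0∞)⁻¹ * ((μ E)⁻¹ * Nrm) =
          ENNReal.ofReal ((μ E).toReal⁻¹ * (K / 2)) := by
        rw [ENNReal.ofReal_mul hcpos.le, hcμ,
          ENNReal.ofReal_div_of_pos (by norm_num : (0:ℝ) < 2), ofReal_norm_eq_coe_nnnorm,
          ← hNrm]
        rw [ENNReal.ofReal_ofNat, ENNReal.div_eq_inv_mul]
        ring
      rw [heq]
      exact le_trans hlow hMle
  · -- upper bound
    apply sInf_le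
    intro f hf
    by_cases hn : n = 0
    · subst hn
      have h0 : eN (avgOp μ E f) ≤ 0 := by
        have := (hAred (⨍ x in E, f x ∂μ)).2
        rw [avgOp]
        simpa using this
      exact le_trans h0 zero_le
    · have hNrm0 : Nrm ≠ 0 := by
        intro h
        have hzero : Matrix.toEuclideanCLM (𝕜 := 𝕜) (A * B) = 0 := by
          rw [hNrm] at h
          have h' : ‖Matrix.toEuclideanCLM (𝕜 := 𝕜) (A * B)‖₊ = 0 := by
            exact_mod_cast h
          simpa using h'
        have hpd : ∀ (M : Matrix (Fin n) (Fin n) 𝕜), M.PosDef →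
            ∀ x : EuclideanSpace 𝕜 (Fin n), x ≠ 0 → Matrix.toEuclideanLin M x ≠ 0 := by
          intro M hM x hx hMx
          have hx' : (WithLp.equiv 2 (Fin n → 𝕜)) x ≠ 0 := by
            intro h'
            exact hx ((WithLp.equiv 2 (Fin n → 𝕜)).injective (by simpa using h'))
          have hpos := hM.dotProduct_mulVec_pos hx'
          have hmv : M.mulVec ((WithLp.equiv 2 (Fin n → 𝕜)) x) = 0 := by
            have h2 := congrArg (WithLp.equiv 2 (Fin n → 𝕜)) hMx
            change Matrix.toLin' M ((WithLp.equiv 2 (Fin n → 𝕜)) x) = _ at h2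
            rw [Matrix.toLin'_apply] at h2
            simpa using h2
          rw [hmv] at hpos
          simp at hpos
        obtain ⟨i⟩ := Fin.pos_iff_nonempty.mp (Nat.pos_of_ne_zero hn)
        set x : EuclideanSpace 𝕜 (Fin n) := EuclideanSpace.single i (1 : 𝕜) with hxdef
        have hx0 : x ≠ 0 := by
          intro h'
          have hn1 : ‖x‖ = 1 := by
            rw [hxdef, EuclideanSpace.norm_single, norm_one]
          rw [h', norm_zero] at hn1
          exact one_ne_zero hn1.symm
        have h1 : Matrix.toEuclideanLin B x ≠ 0 := hpd B hBpd x hx0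
        have h2 : Matrix.toEuclideanLin A (Matrix.toEuclideanLin B x) ≠ 0 :=
          hpd A hApd _ h1
        apply h2
        rw [← hcomp]
        rw [← hTapp, hzero]
        rfl
      rcases eq_or_ne (eN f) ⊤ with htop | htop
      · rw [htop]
        have hne : (n : ℝ≥0∞) * ((μ E)⁻¹ * Nrm) ≠ 0 := by
          apply mul_ne_zero
          · exact_mod_cast hn
          · exact mul_ne_zero (ENNReal.inv_ne_zero.mpr hEfin) hNrm0
        rw [ENNReal.mul_top hne]
        exact le_top
      · -- main case
        have hInt : IntegrableOn f E μ := integrableOn_of_eN hHom E hE hX'fin f hf htop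
        set u := ∫ x in E, f x ∂μ with hu
        set t := (eN f).toReal with ht
        have hkey : ∀ v : EuclideanSpace 𝕜 (Fin n), ‖(inner 𝕜 u v : 𝕜)‖ ≤
            t * (Real.sqrt n * ‖Matrix.toEuclideanLin B v‖) := fun v =>
          inner_setIntegral_le hHom E hE hX'fin B (fun w => (hBred w).2) f hf htop hInt v
        have hTAu : ‖Matrix.toEuclideanLin A u‖ ≤ t * (Real.sqrt n * K) := by
          set w := Matrix.toEuclideanLin A u with hw
          have hsq : ‖w‖ ^ 2 ≤ (t * (Real.sqrt n * K)) * ‖w‖ := by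
            have h1 : ‖w‖ ^ 2 = ‖(inner 𝕜 w w : 𝕜)‖ := by
              rw [inner_self_eq_norm_sq_to_K, norm_pow]
              simp
            have h2 : (inner 𝕜 w w : 𝕜) = inner 𝕜 u (Matrix.toEuclideanLin A w) := by
              rw [hw]
              exact hAsymm u w
            have h3 := hkey (Matrix.toEuclideanLin A w)
            have h4 : ‖Matrix.toEuclideanLin B (Matrix.toEuclideanLin A w)‖ ≤ K * ‖w‖ := by
              have : Matrix.toEuclideanLin B (Matrix.toEuclideanLin A w)
                  = Matrix.toEuclideanCLM (𝕜 := 𝕜) (B * A) w := by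
                rw [← hcomp, hTapp]
              rw [this]
              calc ‖Matrix.toEuclideanCLM (𝕜 := 𝕜) (B * A) w‖
                  ≤ ‖Matrix.toEuclideanCLM (𝕜 := 𝕜) (B * A)‖ * ‖w‖ :=
                    ContinuousLinearMap.le_opNorm _ _
                _ = K * ‖w‖ := by rw [hswap, hK]
            calc ‖w‖ ^ 2 = ‖(inner 𝕜 u (Matrix.toEuclideanLin A w) : 𝕜)‖ := by rw [h1, h2]
              _ ≤ t * (Real.sqrt n * ‖Matrix.toEuclideanLin B (Matrix.toEuclideanLin A w)‖) := h3
              _ ≤ t * (Real.sqrt n * (K * ‖w‖)) := by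
                  have ht0 : 0 ≤ t := ENNReal.toReal_nonneg
                  have hs0 : 0 ≤ Real.sqrt n := Real.sqrt_nonneg _
                  nlinarith [mul_le_mul_of_nonneg_left h4 hs0]
              _ = (t * (Real.sqrt n * K)) * ‖w‖ := by ring
          rcases eq_or_lt_of_le (norm_nonneg w) with hw0 | hw0
          · rw [← hw0]
            have ht0 : 0 ≤ t := ENNReal.toReal_nonneg
            positivity
          · have := hsq
            rw [pow_two] at this
            exact le_of_mul_le_mul_right this hw0
        -- conclude
        have havg : avgOp μ E f = E.indicator fun _ => ((μ E).toReal⁻¹ • u) := by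
          rw [avgOp, setAverage_eq, hu, measureReal_def]
        calc eN (avgOp μ E f)
            ≤ ENNReal.ofReal (Real.sqrt n) *
              (‖Matrix.toEuclideanLin A ((μ E).toReal⁻¹ • u)‖₊ : ℝ≥0∞) := by
              rw [havg]
              exact (hAred ((μ E).toReal⁻¹ • u)).2
          _ = ENNReal.ofReal (Real.sqrt n) *
              ENNReal.ofReal ((μ E).toReal⁻¹ * ‖Matrix.toEuclideanLin A u‖) := by
              congr 1
              rw [← ofReal_norm_eq_coe_nnnorm]
              congr 1
              rw [LinearMap.map_smul_of_tower, norm_smul, Real.norm_eq_abs,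
                abs_of_nonneg hcpos.le]
          _ ≤ ENNReal.ofReal (Real.sqrt n) *
              ENNReal.ofReal ((μ E).toReal⁻¹ * (t * (Real.sqrt n * K))) := by
              exact mul_le_mul_right (ENNReal.ofReal_le_ofReal
                (mul_le_mul_of_nonneg_left hTAu hcpos.le)) _
          _ = (n : ℝ≥0∞) * ((μ E)⁻¹ * Nrm) * eN f := by
              rw [← ENNReal.ofReal_mul (Real.sqrt_nonneg _)]
              have hreal : Real.sqrt n * ((μ E).toReal⁻¹ * (t * (Real.sqrt n * K)))
                  = (n : ℝ) * ((μ E).toReal⁻¹ * K) * t := by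
                have hss : Real.sqrt n * Real.sqrt n = (n : ℝ) :=
                  Real.mul_self_sqrt (Nat.cast_nonneg n)
                linear_combination ((μ E).toReal⁻¹ * t * K) * hss
              rw [hreal]
              rw [ENNReal.ofReal_mul (by positivity : (0:ℝ) ≤ (n : ℝ) * ((μ E).toReal⁻¹ * K)),
                ENNReal.ofReal_mul (by positivity : (0:ℝ) ≤ (n : ℝ)),
                ENNReal.ofReal_mul hcpos.le]
              rw [ENNReal.ofReal_natCast, hcμ, ofReal_norm_eq_coe_nnnorm, ← hNrm,
                ht, ENNReal.ofReal_toReal htop]
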